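/- Let d ≥ 1 and let f : ℤ → ℚ be given by a polynomial of degree at most d such that f(m−1) = (−1)^d · f(−m) for every integer m. Let D(X) = (1−X)^{d+1} · Σ_{m≥0} f(m) X^m, a polynomial of degree at most d. Then D is palindromic of degree d: the reversed polynomial D*(X) = X^d · D(1/X) equals D(X). -/

import Mathlib

open Finset Polynomial


lemma aux_coeff_15 (n k : ℕ) :
    (PowerSeries.coeff k) ((1 - PowerSeries.X) ^ n) = (-1 : ℚ) ^ k * (n.choose k : ℚ) := by
  rw [sub_pow, map_sum]
  have hterm : ∀ m ∈ range (n + 1),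
      (PowerSeries.coeff k) ((-1 : PowerSeries ℚ) ^ (m + n) * 1 ^ m * PowerSeries.X ^ (n - m)
        * (n.choose m : PowerSeries ℚ))
      = if k = n - m then (-1 : ℚ) ^ (m + n) * (n.choose m : ℚ) else 0 := by
    intro m _
    have h1 : ((-1 : PowerSeries ℚ) ^ (m + n)) = PowerSeries.C ((-1 : ℚ) ^ (m + n)) := by
      simp
    have h2 : ((n.choose m : PowerSeries ℚ)) = PowerSeries.C ((n.choose m : ℚ)) := by
      simp
    rw [h1, h2, one_pow, mul_one, mul_comm (PowerSeries.C ((-1:ℚ)^(m+n)) * _),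
      PowerSeries.coeff_C_mul, mul_comm, PowerSeries.coeff_C_mul, PowerSeries.coeff_X_pow]
    by_cases h : k = n - m <;> simp [h] <;> ring
  rw [Finset.sum_congr rfl hterm]
  by_cases hk : k ≤ n
  · rw [Finset.sum_eq_single (n - k)]
    · have : k = n - (n - k) := by omega
      rw [if_pos this, Nat.choose_symm hk]
      congr 1
      have h2 : n - k + n = k + 2 * (n - k) := by omega
      rw [h2, pow_add, pow_mul]
      simp
    · intro m hm hne
      rw [if_neg]
      rw [mem_range] at hm; omega
    · intro h; exact absurd (mem_range.2 (by omega)) h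
  · rw [Finset.sum_eq_zero, Nat.choose_eq_zero_of_lt (by omega)]
    · simp
    · intro m hm; rw [mem_range] at hm; rw [if_neg (by omega)]


lemma aux_diff_15 : ∀ (d : ℕ) (p : Polynomial ℚ), p.natDegree ≤ d →
    (fwdDiff (1:ℤ))^[d+1] (fun x : ℤ => p.eval (x:ℚ)) = 0 := by
  intro d
  induction d with
  | zero =>
    intro p hp
    have hc := Polynomial.eq_C_of_natDegree_eq_zero (Nat.le_zero.1 hp)
    rw [hc]
    funext x
    simp [fwdDiff]
  | succ d ih =>
    intro p hp
    rw [Function.iterate_succ_apply]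
    set q : Polynomial ℚ := p.comp (X + 1) - p with hq
    have hdq : (fwdDiff (1:ℤ)) (fun x : ℤ => p.eval (x:ℚ)) = fun x : ℤ => q.eval (x:ℚ) := by
      funext x
      simp only [fwdDiff, hq, eval_sub, eval_comp, eval_add, eval_X, eval_one]
      push_cast
      ring_nf
    rw [hdq]
    have hX1 : (X + 1 : ℚ[X]).natDegree = 1 := by
      rw [show (X + 1 : ℚ[X]) = X + C 1 by simp]
      exact Polynomial.natDegree_X_add_C 1
    apply ih
    by_cases h0 : p.natDegree = 0
    · have := Polynomial.eq_C_of_natDegree_eq_zero h0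
      rw [hq, this]
      simp
    · have hp0 : p ≠ 0 := fun h => h0 (by simp [h])
      have hc0 : p.comp (X + 1) ≠ 0 := by
        intro h
        have := Polynomial.natDegree_comp (p := p) (q := X + 1)
        rw [h] at this
        rw [Polynomial.natDegree_zero, hX1, mul_one] at this
        exact h0 this.symm
      have hnd : (p.comp (X + 1)).natDegree = p.natDegree := by
        rw [Polynomial.natDegree_comp, hX1, mul_one]
      have hdeg : (p.comp (X + 1)).degree = p.degree := by
        rw [Polynomial.degree_eq_natDegree hc0, Polynomial.degree_eq_natDegree hp0, hnd]
      have hlt : q.degree < p.degree := by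
        have := Polynomial.degree_sub_lt hdeg hc0
          (by rw [Polynomial.leadingCoeff_comp (by rw [hX1]; omega),
                show (X + 1 : ℚ[X]).leadingCoeff = 1 from
                  (by rw [show (X + 1 : ℚ[X]) = X + C 1 by simp]; exact monic_X_add_C 1),
                one_pow, mul_one])
        rw [hdeg] at this
        exact this
      by_cases hq0 : q = 0
      · rw [hq0]; simp
      · have : q.natDegree < p.natDegree := Polynomial.natDegree_lt_natDegree hq0 hlt
        omega



lemma aux_sum_15 (d : ℕ) (p : Polynomial ℚ) (hp : p.natDegree ≤ d) (x : ℤ) :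
    ∑ k ∈ Finset.range (d+2), (-1:ℚ)^k * ((d+1).choose k : ℚ) * p.eval ((x - k : ℤ) : ℚ) = 0 := by
  have h0 := congrFun (aux_diff_15 d p hp) (x - (d+1))
  rw [fwdDiff_iter_eq_sum_shift, Pi.zero_apply] at h0
  rw [← h0, ← Finset.sum_range_reflect]
  apply Finset.sum_congr rfl
  intro j hj
  rw [mem_range] at hj
  have h1 : d + 2 - 1 - j = d + 1 - j := by omega
  rw [h1, zsmul_eq_mul]
  have h2 : (d+1).choose (d+1-j) = (d+1).choose j := Nat.choose_symm (by omega)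
  have h3 : x - ((d + 1 - j : ℕ) : ℤ) = x - (d+1) + j • (1:ℤ) := by
    simp only [nsmul_eq_mul, mul_one]
    omega
  rw [h2, h3]
  push_cast
  ring

open Finset Polynomial


theorem stmt_15 (d : ℕ) (hd : 1 ≤ d) (f : ℤ → ℚ) (p : Polynomial ℚ)
    (hdeg : p.natDegree ≤ d) (hf : ∀ m : ℤ, f m = p.eval (m : ℚ))
    (hsym : ∀ m : ℤ, f (m - 1) = (-1 : ℚ) ^ d * f (-m)) :
    PowerSeries.mk (fun i : ℕ =>
        if i ≤ d then
          PowerSeries.coeff (d - i)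
            ((1 - PowerSeries.X) ^ (d + 1) * PowerSeries.mk fun m : ℕ => f (m : ℤ))
        else 0) =
      (1 - PowerSeries.X) ^ (d + 1) * PowerSeries.mk fun m : ℕ => f (m : ℤ) := by
  have hD : ∀ N : ℕ, PowerSeries.coeff N
      ((1 - PowerSeries.X) ^ (d + 1) * PowerSeries.mk fun m : ℕ => f (m : ℤ))
      = ∑ k ∈ Finset.range (N+1), (-1:ℚ)^k * ((d+1).choose k : ℚ) * f ((N:ℤ) - k) := by
    intro N
    rw [PowerSeries.coeff_mul, Finset.Nat.sum_antidiagonal_eq_sum_range_succ_mk]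
    refine Finset.sum_congr rfl fun k hk => ?_
    rw [Finset.mem_range] at hk
    rw [aux_coeff_15, PowerSeries.coeff_mk]
    congr 2
    omega
  have hfull : ∀ x : ℤ,
      ∑ k ∈ Finset.range (d+2), (-1:ℚ)^k * ((d+1).choose k : ℚ) * f (x - k) = 0 := by
    intro x
    have h := aux_sum_15 d p hdeg x
    simp only [← hf] at h
    exact h
  apply PowerSeries.ext
  intro n
  rw [PowerSeries.coeff_mk]
  by_cases hn : n ≤ d
  · rw [if_pos hn, hD, hD]
    set m := d - n with hm
    have hfe := hfull (m : ℤ)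
    rw [Finset.range_eq_Ico,
      ← Finset.sum_Ico_consecutive _ (Nat.zero_le (m+1)) (by omega : m+1 ≤ d+2),
      ← Finset.range_eq_Ico] at hfe
    rw [eq_neg_of_add_eq_zero_left hfe, Finset.sum_Ico_eq_sum_range,
      show d + 2 - (m+1) = n + 1 by omega,
      ← Finset.sum_range_reflect (fun i => (-1:ℚ)^i * ((d+1).choose i : ℚ) * f ((n:ℤ) - i)) (n+1),
      ← Finset.sum_neg_distrib]
    apply Finset.sum_congr rfl
    intro j hj
    rw [Finset.mem_range] at hj
    simp only [Nat.add_sub_cancel]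
    have e1 : ((m:ℤ)) - ((m+1+j : ℕ) : ℤ) = -((j:ℤ)+1) := by push_cast; ring
    have e2 : ((n:ℤ)) - ((n-j : ℕ) : ℤ) = (j:ℤ) := by omega
    have hC : (d+1).choose (m+1+j) = (d+1).choose (n-j) := by
      rw [show m+1+j = (d+1) - (n-j) by omega]
      exact Nat.choose_symm (by omega)
    have hsq : ((-1:ℚ)^d) * ((-1:ℚ)^d) = 1 := by
      rw [← pow_add]; exact Even.neg_one_pow ⟨d, rfl⟩
    have e3 : f (-((j:ℤ)+1)) = (-1:ℚ)^d * f (j:ℤ) := by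
      have h := hsym ((j:ℤ)+1)
      rw [show (j:ℤ)+1-1 = (j:ℤ) by ring, show -((j:ℤ)+1) = -((j:ℤ)+1) from rfl] at h
      rw [h, ← mul_assoc, hsq, one_mul]
    have h5 : (-1:ℚ)^(m+1+j) * (-1:ℚ)^d * (-1:ℚ)^(n-j) = -1 := by
      rw [← pow_add, ← pow_add, show (m+1+j)+d+(n-j) = 2*d+1 by omega, pow_succ, pow_mul]
      simp
    have h6 : (-1:ℚ)^(n-j) * (-1:ℚ)^(n-j) = 1 := by
      rw [← pow_add]; exact Even.neg_one_pow ⟨n-j, rfl⟩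
    have e4 : -((-1:ℚ)^(m+1+j) * (-1:ℚ)^d) = (-1:ℚ)^(n-j) := by
      linear_combination (-(-1:ℚ)^(n-j)) * h5 + ((-1:ℚ)^(m+1+j) * (-1:ℚ)^d) * h6
    rw [e1, e2, e3, hC]
    linear_combination (((d+1).choose (n-j) : ℚ) * f (j:ℤ)) * e4
  · rw [if_neg hn, hD, ← hfull (n:ℤ)]
    apply Finset.sum_subset (Finset.range_subset_range.2 (by omega))
    intro k hk hnk
    rw [Finset.mem_range] at hk hnk
    rw [Nat.choose_eq_zero_of_lt (by omega)]
    simp
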